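/- Let n ≥ 1 be an integer and t > 0. For every (z,w) ∈ ℂ^{2n} and every η ∈ ℝ, the absolutely convergent integral I(λ) = ∫_ℝ exp(2t(λ+is/2)²) · exp(-2η(λ+is/2)) · W_t^{λ+is/2}(z,w) ds takes the same value for all λ > 0; i.e. the defining integral of the partial weight function W_t^+ is independent of the choice of λ > 0. -/

import Mathlib

set_option maxHeartbeats 2000000

open MeasureTheory Complex Filter Topology

noncomputable section

/-- The weight function with complex parameter `μ` (for `Re μ ≠ 0`):
`W_t^μ(x+iy, u+iv) = 4^n exp(μ(u·y - v·x)) (4π)^{-n} (μ/sinh(2tμ))^n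
  exp(-μ·coth(2tμ)·(|y|²+|v|²))`. -/
def WtC (n : ℕ) (t : ℝ) (mu : ℂ) (z w : Fin n → ℂ) : ℂ :=
  4 ^ n *
    Complex.exp (mu * ((((∑ j, (w j).re * (z j).im) - ∑ j, (w j).im * (z j).re : ℝ)) : ℂ)) *
    (((4 * Real.pi) ^ n)⁻¹ : ℝ) * (mu / Complex.sinh (2 * t * mu)) ^ n *
    Complex.exp (-(mu * (Complex.cosh (2 * t * mu) / Complex.sinh (2 * t * mu))) *
      (((∑ j, (z j).im ^ 2) + ∑ j, (w j).im ^ 2 : ℝ) : ℂ))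

/-! ### Auxiliary lemmas -/

lemma sinh_decomp (x y : ℝ) :
    Complex.sinh (x + y * Complex.I) =
      ((Real.sinh x * Real.cos y : ℝ) : ℂ) + ((Real.cosh x * Real.sin y : ℝ) : ℂ) * Complex.I := by
  rw [Complex.sinh_add, Complex.cosh_mul_I, Complex.sinh_mul_I,
    ← Complex.ofReal_sinh, ← Complex.ofReal_cosh, ← Complex.ofReal_sin, ← Complex.ofReal_cos]
  push_cast
  ring

lemma cosh_decomp (x y : ℝ) :
    Complex.cosh (x + y * Complex.I) =
      ((Real.cosh x * Real.cos y : ℝ) : ℂ) + ((Real.sinh x * Real.sin y : ℝ) : ℂ) * Complex.I := by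
  rw [Complex.cosh_add, Complex.cosh_mul_I, Complex.sinh_mul_I,
    ← Complex.ofReal_sinh, ← Complex.ofReal_cosh, ← Complex.ofReal_sin, ← Complex.ofReal_cos]
  push_cast
  ring

lemma norm_sinh_sq (x y : ℝ) :
    ‖Complex.sinh (x + y * Complex.I)‖ ^ 2 = Real.sinh x ^ 2 + Real.sin y ^ 2 := by
  rw [sinh_decomp, Complex.norm_add_mul_I,
    Real.sq_sqrt (by positivity)]
  have h1 := Real.sin_sq_add_cos_sq y
  have h2 := Real.cosh_sq x
  nlinarith [h1, h2]

lemma le_norm_sinh {x : ℝ} (y : ℝ) (hx : 0 ≤ x) :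
    Real.sinh x ≤ ‖Complex.sinh (x + y * Complex.I)‖ := by
  have h := norm_sinh_sq x y
  have h0 : 0 ≤ Real.sinh x := Real.sinh_nonneg_iff.2 hx
  have h1 : (0:ℝ) ≤ ‖Complex.sinh (x + y * Complex.I)‖ := norm_nonneg _
  nlinarith [sq_nonneg (Real.sin y)]

lemma norm_cosh_le (x y : ℝ) :
    ‖Complex.cosh (x + y * Complex.I)‖ ≤ Real.cosh x := by
  have h : ‖Complex.cosh (x + y * Complex.I)‖ ^ 2 = Real.cosh x ^ 2 - Real.sin y ^ 2 := by
    rw [cosh_decomp, Complex.norm_add_mul_I,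
      Real.sq_sqrt (by positivity)]
    have h1 := Real.sin_sq_add_cos_sq y
    have h2 := Real.cosh_sq x
    nlinarith [h1, h2]
  have h0 : (0:ℝ) < Real.cosh x := Real.cosh_pos x
  have h1 : (0:ℝ) ≤ ‖Complex.cosh (x + y * Complex.I)‖ := norm_nonneg _
  nlinarith [sq_nonneg (Real.sin y)]

lemma sinh_ne_zero_of_re_pos {ζ : ℂ} (h : 0 < ζ.re) : Complex.sinh ζ ≠ 0 := by
  intro h0
  have h1 : Real.sinh ζ.re ≤ ‖Complex.sinh ((ζ.re : ℂ) + (ζ.im : ℂ) * Complex.I)‖ :=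
    le_norm_sinh _ h.le
  rw [Complex.re_add_im, h0, norm_zero] at h1
  exact absurd h1 (not_le.2 (Real.sinh_pos_iff.2 h))

/-- Shifting a vertical line of integration for a holomorphic function with Gaussian decay
on a closed strip. -/
lemma vert_line_shift (f : ℂ → ℂ) (a b c C : ℝ) (hab : a ≤ b) (hc : 0 < c)
    (hd : ∀ μ : ℂ, a ≤ μ.re → μ.re ≤ b → DifferentiableAt ℂ f μ)
    (hbd : ∀ x y : ℝ, a ≤ x → x ≤ b →
      ‖f ((x : ℂ) + (y : ℂ) * Complex.I)‖ ≤ C * Real.exp (-c * y ^ 2)) :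
    (∫ y : ℝ, f ((a : ℂ) + (y : ℂ) * Complex.I))
      = ∫ y : ℝ, f ((b : ℂ) + (y : ℂ) * Complex.I) := by
  -- continuity on vertical lines
  have hcont : ∀ x : ℝ, a ≤ x → x ≤ b →
      Continuous fun y : ℝ => f ((x : ℂ) + (y : ℂ) * Complex.I) := by
    intro x hax hxb
    rw [continuous_iff_continuousAt]
    intro y
    have h1 : ContinuousAt f ((x : ℂ) + (y : ℂ) * Complex.I) := by
      refine (hd _ ?_ ?_).continuousAt <;> simp [hax, hxb]
    have h2 : Continuous fun y : ℝ => (x : ℂ) + (y : ℂ) * Complex.I := by fun_prop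
    exact ContinuousAt.comp (x := y) (g := f)
      (f := fun y : ℝ => (x : ℂ) + (y : ℂ) * Complex.I) h1 h2.continuousAt
  have hMint : Integrable (fun y : ℝ => C * Real.exp (-c * y ^ 2)) :=
    (integrable_exp_neg_mul_sq hc).const_mul C
  have hint : ∀ x : ℝ, a ≤ x → x ≤ b →
      Integrable (fun y : ℝ => f ((x : ℂ) + (y : ℂ) * Complex.I)) := by
    intro x hax hxb
    refine hMint.mono' ((hcont x hax hxb).aestronglyMeasurable) ?_
    exact Filter.Eventually.of_forall fun y => hbd x y hax hxb
  -- horizontal integrals tend to zero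
  have hexp0 : Tendsto (fun R : ℝ => C * Real.exp (-c * R ^ 2) * |b - a|) atTop (𝓝 0) := by
    have h1 : Tendsto (fun R : ℝ => -c * R ^ 2) atTop atBot := by
      have := (tendsto_pow_atTop (n := 2) (by norm_num)).const_mul_atTop hc
      have h2 : Tendsto (fun R : ℝ => c * R ^ 2) atTop atTop := this
      simpa [neg_mul] using tendsto_neg_atBot_iff.2 h2
    have h2 : Tendsto (fun R : ℝ => Real.exp (-c * R ^ 2)) atTop (𝓝 0) :=
      Real.tendsto_exp_atBot.comp h1
    have := (h2.const_mul C).mul_const |b - a|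
    simpa using this
  have hhor : ∀ R : ℝ, ‖∫ x : ℝ in a..b, f ((x : ℂ) + (R : ℂ) * Complex.I)‖
      ≤ C * Real.exp (-c * R ^ 2) * |b - a| := by
    intro R
    refine intervalIntegral.norm_integral_le_of_norm_le_const ?_
    intro x hx
    have hx' : x ∈ Set.Icc a b := by
      rcases hx with ⟨h1, h2⟩
      rw [min_eq_left hab] at h1
      rw [max_eq_right hab] at h2
      exact ⟨le_of_lt h1, h2⟩
    exact hbd x R hx'.1 hx'.2
  -- rectangle identity
  have hrect : ∀ R : ℝ,
      Complex.I • (∫ y : ℝ in -R..R, f ((a : ℂ) + (y : ℂ) * Complex.I))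
        = Complex.I • (∫ y : ℝ in -R..R, f ((b : ℂ) + (y : ℂ) * Complex.I))
          + (∫ x : ℝ in a..b, f ((x : ℂ) + ((-R : ℝ) : ℂ) * Complex.I))
          - ∫ x : ℝ in a..b, f ((x : ℂ) + ((R : ℝ) : ℂ) * Complex.I) := by
    intro R
    have key := Complex.integral_boundary_rect_eq_zero_of_differentiableOn f
      ⟨a, -R⟩ ⟨b, R⟩ ?_
    · have hz : (⟨a, -R⟩ : ℂ).re = a := rfl
      have hz2 : (⟨a, -R⟩ : ℂ).im = -R := rfl
      have hw : (⟨b, R⟩ : ℂ).re = b := rfl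
      have hw2 : (⟨b, R⟩ : ℂ).im = R := rfl
      rw [hz, hz2, hw, hw2] at key
      simp only [smul_eq_mul] at key ⊢
      push_cast at key ⊢
      linear_combination -key
    · intro μ hμ
      rw [Complex.mem_reProdIm] at hμ
      obtain ⟨h1, h2⟩ := hμ
      have hz : (⟨a, -R⟩ : ℂ).re = a := rfl
      have hw : (⟨b, R⟩ : ℂ).re = b := rfl
      rw [hz, hw, Set.uIcc_of_le hab] at h1
      exact (hd μ h1.1 h1.2).differentiableWithinAt
  -- pass to the limit R → ∞
  have hva : Tendsto (fun R : ℝ => Complex.I • (∫ y : ℝ in -R..R, f ((a : ℂ) + (y : ℂ) * Complex.I)))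
      atTop (𝓝 (Complex.I • ∫ y : ℝ, f ((a : ℂ) + (y : ℂ) * Complex.I))) := by
    exact Tendsto.const_smul (intervalIntegral_tendsto_integral (hint a le_rfl hab)
      tendsto_neg_atTop_atBot tendsto_id) _
  have hvb : Tendsto (fun R : ℝ => Complex.I • (∫ y : ℝ in -R..R, f ((b : ℂ) + (y : ℂ) * Complex.I)))
      atTop (𝓝 (Complex.I • ∫ y : ℝ, f ((b : ℂ) + (y : ℂ) * Complex.I))) := by
    exact Tendsto.const_smul (intervalIntegral_tendsto_integral (hint b hab le_rfl)
      tendsto_neg_atTop_atBot tendsto_id) _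
  have hh1 : Tendsto (fun R : ℝ => ∫ x : ℝ in a..b, f ((x : ℂ) + ((-R : ℝ) : ℂ) * Complex.I))
      atTop (𝓝 0) := by
    rw [tendsto_zero_iff_norm_tendsto_zero]
    refine squeeze_zero (g := fun R : ℝ => C * Real.exp (-c * R ^ 2) * |b - a|)
      (fun R => norm_nonneg _) (fun R => ?_) hexp0
    have h3 := hhor (-R)
    rw [neg_sq] at h3
    exact h3
  have hh2 : Tendsto (fun R : ℝ => ∫ x : ℝ in a..b, f ((x : ℂ) + ((R : ℝ) : ℂ) * Complex.I))
      atTop (𝓝 0) := by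
    rw [tendsto_zero_iff_norm_tendsto_zero]
    exact squeeze_zero (fun R => norm_nonneg _) (fun R => hhor R) hexp0
  have hlim : Tendsto (fun R : ℝ => Complex.I • (∫ y : ℝ in -R..R, f ((a : ℂ) + (y : ℂ) * Complex.I)))
      atTop (𝓝 (Complex.I • ∫ y : ℝ, f ((b : ℂ) + (y : ℂ) * Complex.I))) := by
    have : Tendsto (fun R : ℝ =>
        Complex.I • (∫ y : ℝ in -R..R, f ((b : ℂ) + (y : ℂ) * Complex.I))
          + (∫ x : ℝ in a..b, f ((x : ℂ) + ((-R : ℝ) : ℂ) * Complex.I))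
          - ∫ x : ℝ in a..b, f ((x : ℂ) + ((R : ℝ) : ℂ) * Complex.I)) atTop
        (𝓝 (Complex.I • (∫ y : ℝ, f ((b : ℂ) + (y : ℂ) * Complex.I)) + 0 - 0)) :=
      (hvb.add hh1).sub hh2
    rw [add_zero, sub_zero] at this
    exact this.congr (fun R => (hrect R).symm)
  have := tendsto_nhds_unique hva hlim
  have hI : (Complex.I : ℂ) ≠ 0 := Complex.I_ne_zero
  rw [smul_eq_mul, smul_eq_mul] at this
  exact mul_left_cancel₀ hI this

/-- The full integrand as a function of the complex parameter. -/
def Fw (n : ℕ) (t η : ℝ) (z w : Fin n → ℂ) (μ : ℂ) : ℂ :=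
  Complex.exp (2 * t * μ ^ 2) * Complex.exp (-2 * η * μ) * WtC n t μ z w

lemma main_aux (n : ℕ) (t : ℝ) (ht : 0 < t) (z w : Fin n → ℂ) (η : ℝ)
    (a b : ℝ) (ha : 0 < a) (hab : a ≤ b) :
    (∫ y : ℝ, Fw n t η z w ((a : ℂ) + (y : ℂ) * Complex.I))
      = ∫ y : ℝ, Fw n t η z w ((b : ℂ) + (y : ℂ) * Complex.I) := by
  obtain ⟨A, hA⟩ : ∃ A : ℝ, A = (∑ j, (w j).re * (z j).im) - ∑ j, (w j).im * (z j).re := ⟨_, rfl⟩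
  obtain ⟨B, hB⟩ : ∃ B : ℝ, B = (∑ j, (z j).im ^ 2) + ∑ j, (w j).im ^ 2 := ⟨_, rfl⟩
  obtain ⟨c₀, hc₀⟩ : ∃ c₀ : ℝ, c₀ = ((4 * Real.pi) ^ n)⁻¹ := ⟨_, rfl⟩
  have hc₀pos : 0 < c₀ := by
    rw [hc₀]; positivity
  have hSa : 0 < Real.sinh (2 * t * a) := Real.sinh_pos_iff.2 (by positivity)
  obtain ⟨K, hK⟩ : ∃ K : ℝ, K = Real.cosh (2 * t * b) / Real.sinh (2 * t * a) := ⟨_, rfl⟩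
  have hKpos : 0 < K := hK ▸ div_pos (Real.cosh_pos _) hSa
  obtain ⟨D, hD⟩ : ∃ D : ℝ, D = (n : ℝ) + K * |B| := ⟨_, rfl⟩
  have hDnn : 0 ≤ D := by rw [hD]; positivity
  obtain ⟨E₀, hE₀⟩ : ∃ E₀ : ℝ,
    E₀ = 2 * t * b ^ 2 + 2 * |η| * b + b * |A| + (n : ℝ) * b + K * b * |B| := ⟨_, rfl⟩
  obtain ⟨C, hC⟩ : ∃ C : ℝ, C = 4 ^ n * c₀ * ((Real.sinh (2 * t * a))⁻¹) ^ n *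
      Real.exp (E₀ + D ^ 2 / (4 * t)) := ⟨_, rfl⟩
  have hb : 0 < b := lt_of_lt_of_le ha hab
  -- nonvanishing of sinh on the strip
  have hS : ∀ μ : ℂ, 0 < μ.re → Complex.sinh (2 * (t : ℂ) * μ) ≠ 0 := by
    intro μ hμ
    apply sinh_ne_zero_of_re_pos
    have : (2 * (t : ℂ) * μ).re = 2 * t * μ.re := by
      simp [Complex.mul_re]
    rw [this]
    positivity
  refine vert_line_shift (Fw n t η z w) a b t C hab ht ?_ ?_
  · -- differentiability
    intro μ haμ hμb
    have hμ : 0 < μ.re := lt_of_lt_of_le ha haμ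
    have hS' := hS μ hμ
    have d0 : DifferentiableAt ℂ (fun μ : ℂ => Complex.sinh (2 * (t : ℂ) * μ)) μ := by
      have h : DifferentiableAt ℂ (fun μ : ℂ => 2 * (t : ℂ) * μ) μ := by fun_prop
      exact h.csinh
    have d0c : DifferentiableAt ℂ (fun μ : ℂ => Complex.cosh (2 * (t : ℂ) * μ)) μ := by
      have h : DifferentiableAt ℂ (fun μ : ℂ => 2 * (t : ℂ) * μ) μ := by fun_prop
      exact h.ccosh
    have d1 : DifferentiableAt ℂ (fun μ : ℂ => Complex.exp (2 * (t : ℂ) * μ ^ 2)) μ := by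
      apply DifferentiableAt.cexp; fun_prop
    have d2 : DifferentiableAt ℂ (fun μ : ℂ => Complex.exp (-2 * (η : ℂ) * μ)) μ := by
      apply DifferentiableAt.cexp; fun_prop
    have d3 : DifferentiableAt ℂ (fun μ : ℂ => Complex.exp
        (μ * ((((∑ j, (w j).re * (z j).im) - ∑ j, (w j).im * (z j).re : ℝ)) : ℂ))) μ := by
      apply DifferentiableAt.cexp; fun_prop
    have d4 : DifferentiableAt ℂ
        (fun μ : ℂ => (μ / Complex.sinh (2 * (t : ℂ) * μ)) ^ n) μ :=
      (differentiableAt_id.div d0 hS').pow n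
    have d5 : DifferentiableAt ℂ (fun μ : ℂ => Complex.exp
        (-(μ * (Complex.cosh (2 * (t : ℂ) * μ) / Complex.sinh (2 * (t : ℂ) * μ))) *
          (((∑ j, (z j).im ^ 2) + ∑ j, (w j).im ^ 2 : ℝ) : ℂ))) μ := by
      apply DifferentiableAt.cexp
      exact ((differentiableAt_id.mul (d0c.div d0 hS')).neg).mul_const _
    have : DifferentiableAt ℂ (fun μ : ℂ =>
        Complex.exp (2 * (t : ℂ) * μ ^ 2) * Complex.exp (-2 * (η : ℂ) * μ) *
          ((4 : ℂ) ^ n *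
            Complex.exp (μ * ((((∑ j, (w j).re * (z j).im) - ∑ j, (w j).im * (z j).re : ℝ)) : ℂ)) *
            ((((4 * Real.pi) ^ n)⁻¹ : ℝ) : ℂ) *
            (μ / Complex.sinh (2 * (t : ℂ) * μ)) ^ n *
            Complex.exp (-(μ * (Complex.cosh (2 * (t : ℂ) * μ) /
              Complex.sinh (2 * (t : ℂ) * μ))) *
              (((∑ j, (z j).im ^ 2) + ∑ j, (w j).im ^ 2 : ℝ) : ℂ)))) μ :=
      (d1.mul d2).mul (((((differentiableAt_const _).mul d3).mul
        (differentiableAt_const _)).mul d4).mul d5)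
    exact this
  · -- the Gaussian bound
    intro x y hax hxb
    have hx : 0 < x := lt_of_lt_of_le ha hax
    obtain ⟨μ, hμdef⟩ : ∃ μ : ℂ, μ = (x : ℂ) + (y : ℂ) * Complex.I := ⟨_, rfl⟩
    have hμ2 : 2 * (t : ℂ) * μ = ((2 * t * x : ℝ) : ℂ) + ((2 * t * y : ℝ) : ℂ) * Complex.I := by
      rw [hμdef]; push_cast; ring
    have hSlb : Real.sinh (2 * t * a) ≤ ‖Complex.sinh (2 * (t : ℂ) * μ)‖ := by
      rw [hμ2]
      refine le_trans ?_ (le_norm_sinh _ (by positivity))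
      exact Real.sinh_le_sinh.2 (by nlinarith)
    have hSpos' : 0 < ‖Complex.sinh (2 * (t : ℂ) * μ)‖ := lt_of_lt_of_le hSa hSlb
    have hChub : ‖Complex.cosh (2 * (t : ℂ) * μ)‖ ≤ Real.cosh (2 * t * b) := by
      rw [hμ2]
      refine le_trans (norm_cosh_le _ _) ?_
      refine Real.cosh_le_cosh.2 ?_
      rw [_root_.abs_of_nonneg (by positivity : (0:ℝ) ≤ 2 * t * x),
        _root_.abs_of_nonneg (by positivity : (0:ℝ) ≤ 2 * t * b)]
      nlinarith
    have hμub : ‖μ‖ ≤ b + |y| := by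
      rw [hμdef]
      refine le_trans (norm_add_le _ _) ?_
      rw [norm_mul, Complex.norm_real, Complex.norm_real, Complex.norm_I, mul_one,
        Real.norm_eq_abs, Real.norm_eq_abs, abs_of_pos hx]
      linarith
    -- real parts of the exponents
    have hr1 : (2 * (t : ℂ) * μ ^ 2).re = 2 * t * (x ^ 2 - y ^ 2) := by
      rw [hμdef]; simp [Complex.mul_re, Complex.mul_im, pow_two]; try ring
    have hr2 : (-2 * (η : ℂ) * μ).re = -(2 * η * x) := by
      rw [hμdef]; simp [Complex.mul_re, Complex.mul_im]
    have hr3 : (μ * (A : ℂ)).re = x * A := by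
      rw [hμdef]; simp [Complex.mul_re, Complex.mul_im]
    have hr4 : (-(μ * (Complex.cosh (2 * (t : ℂ) * μ) /
        Complex.sinh (2 * (t : ℂ) * μ))) * (B : ℂ)).re ≤ K * (b + |y|) * |B| := by
      refine le_trans (Complex.re_le_norm _) ?_
      rw [norm_mul, norm_neg, norm_mul, norm_div]
      calc ‖μ‖ * (‖Complex.cosh (2 * (t : ℂ) * μ)‖ / ‖Complex.sinh (2 * (t : ℂ) * μ)‖) *
            ‖((B : ℝ) : ℂ)‖
          ≤ (b + |y|) * (Real.cosh (2 * t * b) / Real.sinh (2 * t * a)) * |B| := by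
            have hBnorm : ‖((B : ℝ) : ℂ)‖ = |B| := by
              rw [Complex.norm_real, Real.norm_eq_abs]
            rw [hBnorm]
            gcongr
        _ = K * (b + |y|) * |B| := by rw [hK]; ring
    -- norms of the individual factors
    have e1 : ‖Complex.exp (2 * (t : ℂ) * μ ^ 2)‖ = Real.exp (2 * t * (x ^ 2 - y ^ 2)) := by
      rw [Complex.norm_exp, hr1]
    have e2 : ‖Complex.exp (-2 * (η : ℂ) * μ)‖ = Real.exp (-(2 * η * x)) := by
      rw [Complex.norm_exp, hr2]
    have e3 : ‖Complex.exp (μ * (A : ℂ))‖ = Real.exp (x * A) := by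
      rw [Complex.norm_exp, hr3]
    have e4 : ‖Complex.exp (-(μ * (Complex.cosh (2 * (t : ℂ) * μ) /
        Complex.sinh (2 * (t : ℂ) * μ))) * (B : ℂ))‖ ≤ Real.exp (K * (b + |y|) * |B|) := by
      rw [Complex.norm_exp]
      exact Real.exp_le_exp.2 hr4
    have hbby : (0 : ℝ) ≤ b + |y| := by positivity
    have e5 : ‖(μ / Complex.sinh (2 * (t : ℂ) * μ)) ^ n‖
        ≤ ((Real.sinh (2 * t * a))⁻¹) ^ n * Real.exp ((n : ℝ) * (b + |y|)) := by
      rw [norm_pow, norm_div]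
      calc (‖μ‖ / ‖Complex.sinh (2 * (t : ℂ) * μ)‖) ^ n
          ≤ ((b + |y|) / Real.sinh (2 * t * a)) ^ n := by
            apply pow_le_pow_left₀ (by positivity)
            exact div_le_div₀ hbby hμub hSa hSlb
        _ = ((Real.sinh (2 * t * a))⁻¹) ^ n * (b + |y|) ^ n := by
            rw [div_eq_inv_mul, mul_pow]
        _ ≤ ((Real.sinh (2 * t * a))⁻¹) ^ n * Real.exp ((n : ℝ) * (b + |y|)) := by
            refine mul_le_mul_of_nonneg_left ?_ (by positivity)
            calc (b + |y|) ^ n ≤ (Real.exp (b + |y|)) ^ n := by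
                  apply pow_le_pow_left₀ hbby
                  exact le_trans (le_add_of_nonneg_right one_pos.le) (Real.add_one_le_exp _)
              _ = Real.exp ((n : ℝ) * (b + |y|)) := by
                  rw [← Real.exp_nat_mul]
    have h4n : ‖(4 : ℂ) ^ n‖ = 4 ^ n := by
      rw [norm_pow]; norm_num
    have hc0n : ‖((c₀ : ℝ) : ℂ)‖ = c₀ := by
      rw [Complex.norm_real, Real.norm_eq_abs, abs_of_pos hc₀pos]
    have hx2b : x ^ 2 ≤ b ^ 2 := by nlinarith
    -- the exponential inequality
    have hexp : Real.exp (2 * t * (x ^ 2 - y ^ 2)) * Real.exp (-(2 * η * x)) *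
        Real.exp (x * A) * Real.exp ((n : ℝ) * (b + |y|)) * Real.exp (K * (b + |y|) * |B|)
          ≤ Real.exp (E₀ + D ^ 2 / (4 * t)) * Real.exp (-t * y ^ 2) := by
      rw [← Real.exp_add, ← Real.exp_add, ← Real.exp_add, ← Real.exp_add, ← Real.exp_add]
      refine Real.exp_le_exp.2 ?_
      have habs1 : -(2 * η * x) ≤ 2 * |η| * b := by
        have h1 : -η ≤ |η| := neg_le_abs η
        nlinarith [abs_nonneg η]
      have habs2 : x * A ≤ b * |A| := by
        have h1 : A ≤ |A| := le_abs_self A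
        nlinarith [abs_nonneg A]
      have hgauss : D * |y| - t * y ^ 2 ≤ D ^ 2 / (4 * t) := by
        rw [le_div_iff₀ (by positivity : (0:ℝ) < 4 * t), ← _root_.sq_abs y]
        nlinarith [sq_nonneg (2 * t * |y| - D)]
      rw [hE₀, hD]
      rw [hD] at hgauss
      nlinarith [hgauss, habs1, habs2,
        mul_le_mul_of_nonneg_left hx2b (by positivity : (0:ℝ) ≤ 2 * t)]
    -- put everything together
    rw [← hμdef]
    rw [Fw, WtC]
    rw [show ((((∑ j, (w j).re * (z j).im) - ∑ j, (w j).im * (z j).re : ℝ)) : ℂ) = (A : ℂ) by rw [hA],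
      show (((∑ j, (z j).im ^ 2) + ∑ j, (w j).im ^ 2 : ℝ) : ℂ) = (B : ℂ) by rw [hB],
      show ((((4 * Real.pi) ^ n)⁻¹ : ℝ) : ℂ) = ((c₀ : ℝ) : ℂ) by rw [hc₀]]
    simp only [norm_mul]
    rw [e1, e2, e3, h4n, hc0n]
    calc Real.exp (2 * t * (x ^ 2 - y ^ 2)) * Real.exp (-(2 * η * x)) *
          (4 ^ n * Real.exp (x * A) * c₀ *
            ‖(μ / Complex.sinh (2 * (t : ℂ) * μ)) ^ n‖ *
            ‖Complex.exp (-(μ * (Complex.cosh (2 * (t : ℂ) * μ) /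
              Complex.sinh (2 * (t : ℂ) * μ))) * (B : ℂ))‖)
        ≤ Real.exp (2 * t * (x ^ 2 - y ^ 2)) * Real.exp (-(2 * η * x)) *
          (4 ^ n * Real.exp (x * A) * c₀ *
            (((Real.sinh (2 * t * a))⁻¹) ^ n * Real.exp ((n : ℝ) * (b + |y|))) *
            Real.exp (K * (b + |y|) * |B|)) := by
          gcongr <;> positivity
      _ = (4 ^ n * c₀ * ((Real.sinh (2 * t * a))⁻¹) ^ n) *
          (Real.exp (2 * t * (x ^ 2 - y ^ 2)) * Real.exp (-(2 * η * x)) *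
            Real.exp (x * A) * Real.exp ((n : ℝ) * (b + |y|)) *
            Real.exp (K * (b + |y|) * |B|)) := by ring
      _ ≤ (4 ^ n * c₀ * ((Real.sinh (2 * t * a))⁻¹) ^ n) *
          (Real.exp (E₀ + D ^ 2 / (4 * t)) * Real.exp (-t * y ^ 2)) := by
          refine mul_le_mul_of_nonneg_left hexp (by positivity)
      _ = C * Real.exp (-t * y ^ 2) := by rw [hC]; ring

/-- The defining integral of the partial weight function `W_t^+` is
independent of the choice of `λ > 0`: for all `(z,w) ∈ ℂ^{2n}` and `η ∈ ℝ`, the integral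
`I(λ) = ∫_ℝ exp(2t(λ+is/2)²) exp(-2η(λ+is/2)) W_t^{λ+is/2}(z,w) ds` has the same value for
all `λ > 0`. -/
theorem partial_weight_integral_indep
    (n : ℕ) (hn : 1 ≤ n) (t : ℝ) (ht : 0 < t)
    (z w : Fin n → ℂ) (η : ℝ) (lam₁ lam₂ : ℝ) (h₁ : 0 < lam₁) (h₂ : 0 < lam₂) :
    (∫ s : ℝ,
        Complex.exp (2 * t * ((lam₁ : ℂ) + Complex.I * s / 2) ^ 2) *
          Complex.exp (-2 * (η : ℂ) * ((lam₁ : ℂ) + Complex.I * s / 2)) *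
          WtC n t ((lam₁ : ℂ) + Complex.I * s / 2) z w)
      = ∫ s : ℝ,
          Complex.exp (2 * t * ((lam₂ : ℂ) + Complex.I * s / 2) ^ 2) *
            Complex.exp (-2 * (η : ℂ) * ((lam₂ : ℂ) + Complex.I * s / 2)) *
            WtC n t ((lam₂ : ℂ) + Complex.I * s / 2) z w := by
  have conv : ∀ lam : ℝ,
      (∫ s : ℝ,
          Complex.exp (2 * t * ((lam : ℂ) + Complex.I * s / 2) ^ 2) *
            Complex.exp (-2 * (η : ℂ) * ((lam : ℂ) + Complex.I * s / 2)) *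
            WtC n t ((lam : ℂ) + Complex.I * s / 2) z w)
        = (2 : ℝ) • ∫ y : ℝ, Fw n t η z w ((lam : ℂ) + (y : ℂ) * Complex.I) := by
    intro lam
    have h1 : (∫ s : ℝ,
        Complex.exp (2 * t * ((lam : ℂ) + Complex.I * s / 2) ^ 2) *
          Complex.exp (-2 * (η : ℂ) * ((lam : ℂ) + Complex.I * s / 2)) *
          WtC n t ((lam : ℂ) + Complex.I * s / 2) z w)
        = ∫ s : ℝ, Fw n t η z w ((lam : ℂ) + ((s / 2 : ℝ) : ℂ) * Complex.I) := by
      congr 1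
      funext s
      rw [show (lam : ℂ) + Complex.I * s / 2 = (lam : ℂ) + ((s / 2 : ℝ) : ℂ) * Complex.I by
        push_cast; ring]
      rfl
    rw [h1]
    have h2 := MeasureTheory.Measure.integral_comp_div
      (fun y : ℝ => Fw n t η z w ((lam : ℂ) + (y : ℂ) * Complex.I)) 2
    rw [h2]
    norm_num
  rw [conv lam₁, conv lam₂]
  rcases le_total lam₁ lam₂ with h | h
  · rw [main_aux n t ht z w η lam₁ lam₂ h₁ h]
  · rw [main_aux n t ht z w η lam₂ lam₁ h₂ h]

end
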